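/- Let R be a unital associative ring, M a nonzero left R-module, Ω an infinite set, and E = End_R(∏_{i∈Ω} M). Suppose (R_i)_{i∈I} is a chain of subrings of E (i.e., a family of subrings totally ordered by inclusion) such that ⋃_{i∈I} R_i = E and |I| ≤ |Ω|. Then E = R_i for some i ∈ I. In particular, E is not the union of a chain of ≤ |Ω| proper subrings. -/

import Mathlib

open Cardinal

universe u v

section aux
open scoped Classical

variable {R : Type*} [Ring R] {M : Type*} [AddCommGroup M] [Module R M]
  {Ω : Type u} {I : Type v}

/-- Embedding of `M^Ω` as the `i`-th block of `M^Ω` via `σ : Ω × I ≃ Ω`. -/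
noncomputable def auxEmb (σ : Ω × I ≃ Ω) (i : I) : Module.End R (Ω → M) where
  toFun x p := if (σ.symm p).2 = i then x (σ.symm p).1 else 0
  map_add' x y := funext fun p => by
    split <;> rename_i h <;> simp [h]
  map_smul' c x := funext fun p => by
    split <;> rename_i h <;> simp [h]

/-- Projection of `M^Ω` onto its `i`-th block via `σ : Ω × I ≃ Ω`. -/
def auxProj (σ : Ω × I ≃ Ω) (i : I) : Module.End R (Ω → M) where
  toFun x ω := x (σ (ω, i))
  map_add' x y := rfl
  map_smul' c x := rfl

/-- Block-diagonal endomorphism built from a family `g : I → End`. -/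
def auxDiag (σ : Ω × I ≃ Ω) (g : I → Module.End R (Ω → M)) :
    Module.End R (Ω → M) where
  toFun x p := g (σ.symm p).2 (fun ω => x (σ (ω, (σ.symm p).2))) (σ.symm p).1
  map_add' x y := funext fun p => by
    rw [show (fun ω => (x + y) (σ (ω, (σ.symm p).2)))
        = (fun ω => x (σ (ω, (σ.symm p).2))) + (fun ω => y (σ (ω, (σ.symm p).2))) from rfl,
      map_add]
    rfl
  map_smul' c x := funext fun p => by
    rw [show (fun ω => (c • x) (σ (ω, (σ.symm p).2)))
        = c • (fun ω => x (σ (ω, (σ.symm p).2))) from rfl, map_smul]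
    rfl

lemma auxKey (σ : Ω × I ≃ Ω) (g : I → Module.End R (Ω → M)) (i : I) :
    auxProj (R := R) (M := M) σ i * auxDiag σ g * auxEmb σ i = g i := by
  ext x ω
  simp [auxProj, auxDiag, auxEmb, Module.End.mul_apply]

end aux

theorem stmt5 (R : Type*) [Ring R] (M : Type*) [AddCommGroup M] [Module R M]
    [Nontrivial M] (Ω : Type u) [Infinite Ω] (I : Type v)
    (Rs : I → Subring (Module.End R (Ω → M)))
    (hchain : ∀ i j : I, Rs i ≤ Rs j ∨ Rs j ≤ Rs i)
    (hunion : (⋃ i : I, (Rs i : Set (Module.End R (Ω → M)))) = Set.univ)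
    (hcard : Cardinal.lift.{u} #I ≤ Cardinal.lift.{v} #Ω) :
    ∃ i : I, Rs i = ⊤ := by
  by_contra hne
  push_neg at hne
  have hmem : ∀ x : Module.End R (Ω → M), ∃ i, x ∈ Rs i := fun x =>
    Set.mem_iUnion.mp ((Set.eq_univ_iff_forall.mp hunion) x)
  haveI hI : Nonempty I := (hmem 0).elim fun i _ => ⟨i⟩
  have hf : ∀ i, ∃ x, x ∉ Rs i := by
    intro i
    by_contra h
    push_neg at h
    exact hne i ((Subring.eq_top_iff' _).mpr h)
  choose f hfspec using hf
  have hequiv : Nonempty (Ω × I ≃ Ω) := by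
    rw [← Cardinal.lift_mk_eq']
    rw [Cardinal.mk_prod]
    simp only [Cardinal.lift_mul, Cardinal.lift_lift, Cardinal.lift_id']
    rw [Cardinal.lift_umax.{u,v}]
    exact Cardinal.mul_eq_left (Cardinal.aleph0_le_lift.mpr (Cardinal.aleph0_le_mk Ω)) hcard
      (by simp [Cardinal.mk_ne_zero])

  obtain ⟨σ⟩ := hequiv
  have hab : ∀ i, ∃ j, auxEmb (R := R) (M := M) σ i ∈ Rs j ∧
      auxProj (R := R) (M := M) σ i ∈ Rs j := by
    intro i
    obtain ⟨j1, h1⟩ := hmem (auxEmb σ i)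
    obtain ⟨j2, h2⟩ := hmem (auxProj σ i)
    rcases hchain j1 j2 with h | h
    · exact ⟨j2, h h1, h2⟩
    · exact ⟨j1, h1, h h2⟩
  choose γ hγ1 hγ2 using hab
  have hup : ∀ i, ∃ j, Rs i ≤ Rs j ∧ Rs (γ i) ≤ Rs j := by
    intro i
    rcases hchain i (γ i) with h | h
    · exact ⟨γ i, h, le_refl _⟩
    · exact ⟨i, le_refl _, h⟩
  choose t ht1 ht2 using hup
  obtain ⟨m, hm⟩ := hmem (auxDiag σ (fun i => f (t i)))
  by_cases hc : ∃ i, Rs m ≤ Rs (t i)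
  · obtain ⟨i, hi⟩ := hc
    apply hfspec (t i)
    have hkey := auxKey (R := R) (M := M) σ (fun i => f (t i)) i
    have : auxProj (R := R) (M := M) σ i * auxDiag σ (fun i => f (t i)) * auxEmb σ i
        ∈ Rs (t i) :=
      mul_mem (mul_mem (ht2 i (hγ2 i)) (hi hm)) (ht2 i (hγ1 i))
    rw [hkey] at this
    exact this
  · push_neg at hc
    have hall : ∀ i, Rs i ≤ Rs m := fun i =>
      le_trans (ht1 i) ((hchain (t i) m).resolve_right (hc i))
    refine absurd ((Subring.eq_top_iff' _).mpr fun x => ?_) (hne m)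
    obtain ⟨j, hj⟩ := hmem x
    exact hall j hj
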